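/- arXiv:2102.00146 — 2 statements merged into one kernel-verified Lean document; each statement's English description precedes it below -/
import Mathlib

section
/- Let Q(1),…,Q(d) be r×r real matrices and Σ an r×r real diagonal matrix with Frobenius norm ‖Σ‖_F = 1 satisfying the canonical orthogonality conditions ∑_{i=1}^d Q(i)^T Σ² Q(i) = I and ∑_{i=1}^d Q(i) Σ² Q(i)^T = I. Let T_{Q_R} := ∑_{i=1}^d (Q(i)Σ) ⊗ (Q(i)Σ), and assume T_{Q_R} is diagonalizable, that 1 is a simple eigenvalue of T_{Q_R}, and that every other eigenvalue of T_{Q_R} has modulus strictly less than 1. Then for every r²×r² real matrix M̃, trace(T_{Q_R}^k M̃ T_{Q_R}^k) converges, as k → ∞, to vec(Σ²)^T M̃ vec(I). -/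
open Matrix Filter
open scoped Kronecker

/-- Column-major vectorization of a square matrix, indexed by pairs, chosen so that
`_root_.vec (A * B * C) = (Cᵀ ⊗ₖ A) *ᵥ _root_.vec B` holds for Mathlib's Kronecker product. -/
def vec {r : ℕ} (M : Matrix (Fin r) (Fin r) ℝ) : Fin r × Fin r → ℝ :=
  fun p => M p.2 p.1

lemma kron_mulVec {r : ℕ} (A B M : Matrix (Fin r) (Fin r) ℝ) :
    (A ⊗ₖ B) *ᵥ _root_.vec M = _root_.vec (B * M * Aᵀ) := by
  ext ⟨i1, i2⟩
  simp only [Matrix.mulVec, dotProduct, _root_.vec, Matrix.kroneckerMap_apply,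
    Fintype.sum_prod_type, Matrix.mul_apply, Matrix.transpose_apply, Finset.sum_mul]
  refine Finset.sum_congr rfl fun j1 _ => Finset.sum_congr rfl fun j2 _ => by ring

lemma kron_vecMul {r : ℕ} (A B M : Matrix (Fin r) (Fin r) ℝ) :
    _root_.vec M ᵥ* (A ⊗ₖ B) = _root_.vec (Bᵀ * M * A) := by
  ext ⟨j1, j2⟩
  simp only [Matrix.vecMul, dotProduct, _root_.vec, Matrix.kroneckerMap_apply,
    Fintype.sum_prod_type, Matrix.mul_apply, Matrix.transpose_apply, Finset.sum_mul]
  refine Finset.sum_congr rfl fun i1 _ => Finset.sum_congr rfl fun i2 _ => by ring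

lemma vec_sum {r d : ℕ} (f : Fin d → Matrix (Fin r) (Fin r) ℝ) :
    _root_.vec (∑ i, f i) = ∑ i, _root_.vec (f i) := by
  ext p; simp [_root_.vec, Matrix.sum_apply]

lemma my_sum_mulVec {n : Type*} [Fintype n] [DecidableEq n] {d : ℕ}
    (A : Fin d → Matrix n n ℝ) (x : n → ℝ) :
    (∑ i, A i) *ᵥ x = ∑ i, A i *ᵥ x := by
  ext p
  simp only [Matrix.mulVec, dotProduct, Matrix.sum_apply, Finset.sum_apply,
    Finset.sum_mul]
  rw [Finset.sum_comm]

lemma my_sum_vecMul {n : Type*} [Fintype n] [DecidableEq n] {d : ℕ}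
    (A : Fin d → Matrix n n ℝ) (x : n → ℝ) :
    x ᵥ* (∑ i, A i) = ∑ i, x ᵥ* A i := by
  ext p
  simp only [Matrix.vecMul, dotProduct, Matrix.sum_apply, Finset.sum_apply,
    Finset.mul_sum]
  rw [Finset.sum_comm]

/-- Let `(Q, Σ)` be a normalized iTR in canonical form: `‖Σ‖_F = 1`,
`∑ᵢ Q(i)ᵀ Σ² Q(i) = I` and `∑ᵢ Q(i) Σ² Q(i)ᵀ = I`.  If the transfer matrix
`T_{Q_R} = ∑ᵢ (Q(i)Σ) ⊗ (Q(i)Σ)` is diagonalizable (over `ℂ`) with `1` a simple eigenvalue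
and all other eigenvalues of modulus `< 1`, then for every matrix `M̃`,
`trace (T_{Q_R}^k M̃ T_{Q_R}^k) → vec(Σ²)ᵀ M̃ vec(I)` as `k → ∞`. -/
theorem canonical_rayleigh_quotient_limit {d r : ℕ}
    (Q : Fin d → Matrix (Fin r) (Fin r) ℝ) (σ : Fin r → ℝ)
    (S : Matrix (Fin r) (Fin r) ℝ) (hS : S = Matrix.diagonal σ)
    (hFrob : Real.sqrt (∑ i, ∑ j, S i j ^ 2) = 1)
    (hcanL : ∑ i, (Q i)ᵀ * S ^ 2 * Q i = (1 : Matrix (Fin r) (Fin r) ℝ))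
    (hcanR : ∑ i, Q i * S ^ 2 * (Q i)ᵀ = (1 : Matrix (Fin r) (Fin r) ℝ))
    (TQR : Matrix (Fin r × Fin r) (Fin r × Fin r) ℝ)
    (hTQR : TQR = ∑ i, (Q i * S) ⊗ₖ (Q i * S))
    (W_R W_L : Matrix (Fin r × Fin r) (Fin r × Fin r) ℂ)
    (lam : Fin r × Fin r → ℂ) (i₀ : Fin r × Fin r)
    (hdiag : TQR.map (Complex.ofReal) = W_R * Matrix.diagonal lam * W_Lᴴ)
    (hWLR : W_Lᴴ * W_R = 1)
    (h1 : lam i₀ = 1)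
    (hdom : ∀ i, i ≠ i₀ → ‖lam i‖ < 1)
    (M : Matrix (Fin r × Fin r) (Fin r × Fin r) ℝ) :
    Tendsto (fun k : ℕ => (TQR ^ k * M * TQR ^ k).trace) atTop
      (nhds (dotProduct (_root_.vec (S ^ 2))
        (M.mulVec (_root_.vec (1 : Matrix (Fin r) (Fin r) ℝ))))) := by
  have hSt : Sᵀ = S := by rw [hS, Matrix.diagonal_transpose]
  set v : Fin r × Fin r → ℝ := _root_.vec (1 : Matrix (Fin r) (Fin r) ℝ) with hv_def
  set w : Fin r × Fin r → ℝ := _root_.vec (S ^ 2) with hw_def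
  -- right eigenvector (real)
  have hTv : TQR *ᵥ v = v := by
    rw [hTQR, my_sum_mulVec]
    have hterm : ∀ i, ((Q i * S) ⊗ₖ (Q i * S)) *ᵥ v = _root_.vec (Q i * S ^ 2 * (Q i)ᵀ) := by
      intro i
      rw [hv_def, kron_mulVec]
      congr 1
      rw [mul_one, Matrix.transpose_mul, hSt, ← Matrix.mul_assoc, Matrix.mul_assoc (Q i) S S,
        ← pow_two]
    simp_rw [hterm]
    rw [← vec_sum, hcanR]
  -- left eigenvector (real)
  have hwT : w ᵥ* TQR = w := by
    rw [hTQR, my_sum_vecMul]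
    have hterm : ∀ i, w ᵥ* ((Q i * S) ⊗ₖ (Q i * S)) = _root_.vec (S * ((Q i)ᵀ * S ^ 2 * Q i) * S) := by
      intro i
      rw [hw_def, kron_vecMul]
      congr 1
      rw [Matrix.transpose_mul, hSt]
      simp only [Matrix.mul_assoc]
    simp_rw [hterm]
    have : ∑ i, _root_.vec (S * ((Q i)ᵀ * S ^ 2 * Q i) * S)
        = _root_.vec (S * (∑ i, (Q i)ᵀ * S ^ 2 * Q i) * S) := by
      rw [← vec_sum]
      congr 1
      rw [Finset.mul_sum, Finset.sum_mul]
    rw [this, hcanL, mul_one, ← pow_two]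
  -- normalization
  have hwv : dotProduct w v = 1 := by
    have hnn : (0:ℝ) ≤ ∑ i, ∑ j, S i j ^ 2 := by positivity
    have hsum : ∑ i, ∑ j, S i j ^ 2 = 1 := by
      nlinarith [Real.sq_sqrt hnn, hFrob]
    have hS2 : S ^ 2 = Matrix.diagonal (fun i => σ i * σ i) := by
      rw [hS, pow_two, Matrix.diagonal_mul_diagonal]
    have hdiagsum : ∑ i, σ i * σ i = 1 := by
      rw [hS] at hsum
      calc ∑ i, σ i * σ i = ∑ i, ∑ j, Matrix.diagonal σ i j ^ 2 := by
            refine Finset.sum_congr rfl fun i _ => ?_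
            rw [Finset.sum_eq_single i]
            · simp [Matrix.diagonal_apply_eq, pow_two]
            · intro j _ hj; simp [Matrix.diagonal_apply_ne σ (Ne.symm hj)]
            · simp
        _ = 1 := hsum
    calc dotProduct w v
        = ∑ p : Fin r × Fin r, (S ^ 2) p.2 p.1 * (1 : Matrix (Fin r) (Fin r) ℝ) p.2 p.1 := rfl
      _ = ∑ i : Fin r, ∑ j : Fin r, (S ^ 2) j i * (1 : Matrix (Fin r) (Fin r) ℝ) j i := by
            rw [Fintype.sum_prod_type]
      _ = ∑ i : Fin r, σ i * σ i := by
            refine Finset.sum_congr rfl fun i _ => ?_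
            rw [Finset.sum_eq_single i]
            · simp [hS2, Matrix.diagonal_apply_eq]
            · intro j _ hj
              simp [Matrix.one_apply_ne hj]
            · simp
      _ = 1 := hdiagsum
  -- complexification
  set Tc : Matrix (Fin r × Fin r) (Fin r × Fin r) ℂ := TQR.map Complex.ofReal with hTc_def
  set Mc : Matrix (Fin r × Fin r) (Fin r × Fin r) ℂ := M.map Complex.ofReal with hMc_def
  set vc : Fin r × Fin r → ℂ := fun p => (v p : ℂ) with hvc_def
  set wc : Fin r × Fin r → ℂ := fun p => (w p : ℂ) with hwc_def
  have hTvc : Tc *ᵥ vc = vc := by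
    ext p
    have h := congrFun hTv p
    simp only [Matrix.mulVec, dotProduct] at h ⊢
    simp only [hTc_def, hvc_def, Matrix.map_apply]
    push_cast
    exact_mod_cast congrArg (Complex.ofReal) h
  have hwTc : wc ᵥ* Tc = wc := by
    ext p
    have h := congrFun hwT p
    simp only [Matrix.vecMul, dotProduct] at h ⊢
    simp only [hTc_def, hwc_def, Matrix.map_apply]
    exact_mod_cast congrArg (Complex.ofReal) h
  have hwvc : ∑ q, wc q * vc q = 1 := by
    have h : dotProduct w v = ∑ q, w q * v q := rfl
    rw [h] at hwv
    simp only [hwc_def, hvc_def]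
    exact_mod_cast congrArg (Complex.ofReal) hwv
  -- powers via diagonalization
  have hWRL : W_R * W_Lᴴ = 1 := mul_eq_one_comm.mp hWLR
  have hpow : ∀ k : ℕ, Tc ^ k = W_R * Matrix.diagonal (fun j => lam j ^ k) * W_Lᴴ := by
    intro k
    induction k with
    | zero =>
      simp only [pow_zero]
      rw [Matrix.diagonal_one, mul_one, hWRL]
    | succ k ih =>
      rw [pow_succ, ih, hdiag]
      calc W_R * Matrix.diagonal (fun j => lam j ^ k) * W_Lᴴ * (W_R * Matrix.diagonal lam * W_Lᴴ)
          = W_R * (Matrix.diagonal (fun j => lam j ^ k) * ((W_Lᴴ * W_R) * Matrix.diagonal lam)) * W_Lᴴ := by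
            simp only [Matrix.mul_assoc]
        _ = W_R * Matrix.diagonal (fun j => lam j ^ (k+1)) * W_Lᴴ := by
            rw [hWLR, one_mul, Matrix.diagonal_mul_diagonal]
            have : (fun i => lam i ^ k * lam i) = fun j => lam j ^ (k + 1) := by
              ext j
              simp [pow_succ]
            rw [this]
  -- structure of eigenvectors in the W basis
  set u : Fin r × Fin r → ℂ := W_Lᴴ *ᵥ vc with hu_def
  set s : Fin r × Fin r → ℂ := wc ᵥ* W_R with hs_def
  have hlam_ne : ∀ j, j ≠ i₀ → lam j ≠ 1 := by
    intro j hj h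
    have := hdom j hj
    rw [h] at this
    simp at this
  have hu0 : ∀ j, j ≠ i₀ → u j = 0 := by
    intro j hj
    have hcomm : W_Lᴴ * Tc = Matrix.diagonal lam * W_Lᴴ := by
      rw [hdiag, ← Matrix.mul_assoc, ← Matrix.mul_assoc, hWLR, one_mul]
    have hDu : Matrix.diagonal lam *ᵥ u = u := by
      rw [hu_def, Matrix.mulVec_mulVec, ← hcomm, ← Matrix.mulVec_mulVec, hTvc]
    have hj' : lam j * u j = u j := by
      have := congrFun hDu j
      rwa [Matrix.mulVec_diagonal] at this
    have : (lam j - 1) * u j = 0 := by ring_nf; linear_combination hj'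
    rcases mul_eq_zero.mp this with h | h
    · exact absurd (by linear_combination h) (hlam_ne j hj)
    · exact h
  have hs0 : ∀ j, j ≠ i₀ → s j = 0 := by
    intro j hj
    have hcomm : Tc * W_R = W_R * Matrix.diagonal lam := by
      rw [hdiag, Matrix.mul_assoc, Matrix.mul_assoc, hWLR, mul_one]
    have hsD : s ᵥ* Matrix.diagonal lam = s := by
      rw [hs_def, Matrix.vecMul_vecMul, ← hcomm, ← Matrix.vecMul_vecMul, hwTc]
    have hj' : s j * lam j = s j := by
      have := congrFun hsD j
      rwa [Matrix.vecMul_diagonal] at this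
    have : s j * (lam j - 1) = 0 := by ring_nf; linear_combination hj'
    rcases mul_eq_zero.mp this with h | h
    · exact h
    · exact absurd (by linear_combination h) (hlam_ne j hj)
  have hvcp : ∀ p, vc p = u i₀ * W_R p i₀ := by
    intro p
    have : vc = W_R *ᵥ u := by
      rw [hu_def, Matrix.mulVec_mulVec, hWRL, Matrix.one_mulVec]
    rw [this]
    show ∑ j, W_R p j * u j = u i₀ * W_R p i₀
    rw [Finset.sum_eq_single i₀]
    · ring
    · intro j _ hj; rw [hu0 j hj, mul_zero]
    · simp
  have hwcq : ∀ q, wc q = s i₀ * W_Lᴴ i₀ q := by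
    intro q
    have : wc = s ᵥ* W_Lᴴ := by
      rw [hs_def, Matrix.vecMul_vecMul, hWRL, Matrix.vecMul_one]
    rw [this]
    show ∑ j, s j * W_Lᴴ j q = s i₀ * W_Lᴴ i₀ q
    rw [Finset.sum_eq_single i₀]
    · intro j _ hj; rw [hs0 j hj, zero_mul]
    · simp
  have hsu : s i₀ * u i₀ = 1 := by
    have h1' : (1 : ℂ) = ∑ q, wc q * vc q := hwvc.symm
    have h2 : ∑ q, wc q * vc q = s i₀ * u i₀ * ∑ q, W_Lᴴ i₀ q * W_R q i₀ := by
      rw [Finset.mul_sum]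
      refine Finset.sum_congr rfl fun q _ => ?_
      rw [hwcq q, hvcp q]; ring
    have h3 : ∑ q, W_Lᴴ i₀ q * W_R q i₀ = 1 := by
      have := congrFun (congrFun hWLR i₀) i₀
      rw [Matrix.mul_apply] at this
      rw [this, Matrix.one_apply_eq]
    rw [h2, h3, mul_one] at h1'
    exact h1'.symm
  -- trace formula
  set A : Matrix (Fin r × Fin r) (Fin r × Fin r) ℂ := W_Lᴴ * Mc * W_R with hA_def
  have htr : ∀ k : ℕ, ((TQR ^ k * M * TQR ^ k).trace : ℂ)
      = ∑ j, lam j ^ k * A j j * lam j ^ k := by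
    intro k
    have hmap : (TQR ^ k * M * TQR ^ k).map Complex.ofReal = Tc ^ k * Mc * Tc ^ k := by
      have := (Complex.ofRealHom.mapMatrix :
        Matrix (Fin r × Fin r) (Fin r × Fin r) ℝ →+* Matrix (Fin r × Fin r) (Fin r × Fin r) ℂ)
      calc (TQR ^ k * M * TQR ^ k).map Complex.ofReal
          = Complex.ofRealHom.mapMatrix (TQR ^ k * M * TQR ^ k) := rfl
        _ = Complex.ofRealHom.mapMatrix TQR ^ k * Complex.ofRealHom.mapMatrix M
            * Complex.ofRealHom.mapMatrix TQR ^ k := by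
            rw [_root_.map_mul, _root_.map_mul, _root_.map_pow]
        _ = Tc ^ k * Mc * Tc ^ k := rfl
    have htrace_cast : ((TQR ^ k * M * TQR ^ k).trace : ℂ)
        = ((TQR ^ k * M * TQR ^ k).map Complex.ofReal).trace := by
      simp [Matrix.trace, Matrix.diag, Matrix.map_apply]
    rw [htrace_cast, hmap, hpow k]
    set Dk := Matrix.diagonal (fun j => lam j ^ k) with hDk_def
    have hre : W_R * Dk * W_Lᴴ * Mc * (W_R * Dk * W_Lᴴ) = W_R * (Dk * A * Dk * W_Lᴴ) := by
      rw [hA_def]; simp only [Matrix.mul_assoc]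
    rw [hre, Matrix.trace_mul_comm]
    have : Dk * A * Dk * W_Lᴴ * W_R = Dk * A * Dk := by
      rw [Matrix.mul_assoc (Dk * A * Dk), hWLR, mul_one]
    rw [this]
    simp only [Matrix.trace, Matrix.diag, hDk_def]
    refine Finset.sum_congr rfl fun j _ => ?_
    rw [Matrix.mul_diagonal, Matrix.diagonal_mul]
  -- convergence of the complexified sequence
  have hlim : Tendsto (fun k : ℕ => ∑ j, lam j ^ k * A j j * lam j ^ k) atTop
      (nhds (A i₀ i₀)) := by
    have hAi : A i₀ i₀ = ∑ j, (if j = i₀ then A i₀ i₀ else 0) := by simp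
    rw [hAi]
    refine tendsto_finset_sum _ fun j _ => ?_
    by_cases hj : j = i₀
    · subst hj
      simp only [if_pos rfl, h1, one_pow, one_mul, mul_one]
      exact tendsto_const_nhds
    · simp only [if_neg hj]
      have h0 : Tendsto (fun k : ℕ => lam j ^ k) atTop (nhds 0) :=
        tendsto_pow_atTop_nhds_zero_of_norm_lt_one (hdom j hj)
      have := (h0.mul_const (A j j)).mul h0
      simpa using this
  -- identify the limit
  have hAexp : A i₀ i₀ = ∑ p, (∑ q, W_Lᴴ i₀ q * Mc q p) * W_R p i₀ := by
    rw [hA_def, Matrix.mul_apply]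
    exact Finset.sum_congr rfl fun p _ => by rw [Matrix.mul_apply]
  have hdot : ((dotProduct w (M *ᵥ v) : ℝ) : ℂ) = ∑ q, wc q * ∑ p, Mc q p * vc p := by
    simp only [dotProduct, Matrix.mulVec, hwc_def, hvc_def, hMc_def, Matrix.map_apply]
    push_cast
    rfl
  have hAcalc : A i₀ i₀ = ((dotProduct w (M *ᵥ v) : ℝ) : ℂ) := by
    rw [hdot]
    calc A i₀ i₀ = ∑ p, (∑ q, W_Lᴴ i₀ q * Mc q p) * W_R p i₀ := hAexp
      _ = ∑ p, ∑ q, W_Lᴴ i₀ q * Mc q p * W_R p i₀ := by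
          refine Finset.sum_congr rfl fun p _ => ?_
          rw [Finset.sum_mul]
      _ = ∑ q, ∑ p, W_Lᴴ i₀ q * Mc q p * W_R p i₀ := Finset.sum_comm
      _ = ∑ q, ∑ p, (s i₀ * u i₀) * (W_Lᴴ i₀ q * Mc q p * W_R p i₀) := by
          simp only [hsu, one_mul]
      _ = ∑ q, wc q * ∑ p, Mc q p * vc p := by
          refine Finset.sum_congr rfl fun q _ => ?_
          rw [Finset.mul_sum]
          refine Finset.sum_congr rfl fun p _ => ?_
          rw [hwcq q, hvcp p]
          ring
  -- conclude
  have key : Tendsto (fun k : ℕ => ((TQR ^ k * M * TQR ^ k).trace : ℂ)) atTop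
      (nhds (A i₀ i₀)) := by
    apply hlim.congr
    intro k
    exact (htr k).symm
  rw [hAcalc] at key
  have key2 := (Complex.continuous_re.tendsto _).comp key
  simpa [Function.comp_def] using key2
end

section
/- Let X(1),…,X(d) be r×r real matrices, η > 0, and let V_L and V_R be symmetric positive definite r×r matrices satisfying the transfer-matrix fixed-point equations ∑_{i=1}^d X(i)^T V_L X(i) = η V_L and ∑_{i=1}^d X(i) V_R X(i)^T = η V_R. Let Ũ_L and Ũ_R be invertible r×r matrices with V_L = Ũ_L Ũ_L^T and V_R = Ũ_R Ũ_R^T, and let V Σ̃ W^T = Ũ_L^T Ũ_R be a singular value decomposition, where V and W are orthogonal and Σ̃ is diagonal with strictly positive diagonal entries. Define L := W^T Ũ_R^{-1}, R := Ũ_L^{-T} V, Q(i) := ‖Σ̃‖_F · L X(i) R for i = 1,…,d, and Σ := Σ̃ / ‖Σ̃‖_F. Then ‖Σ‖_F = 1 and the canonical orthogonality conditions hold: ∑_{i=1}^d Q(i)^T Σ² Q(i) = η I and ∑_{i=1}^d Q(i) Σ² Q(i)^T = η I. -/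
open Matrix

/-- **correctness of the canonical decomposition algorithm.**
Given cores `X(i)`, `η > 0`, symmetric positive definite fixed points `V_L`, `V_R` of the
transfer map, factorizations `V_L = Ũ_L Ũ_Lᵀ`, `V_R = Ũ_R Ũ_Rᵀ` with `Ũ_L`, `Ũ_R`
invertible, and an SVD `V Σ̃ Wᵀ = Ũ_Lᵀ Ũ_R` with strictly positive singular values,
the matrices `L = Wᵀ Ũ_R⁻¹`, `R = Ũ_L⁻ᵀ V`, `Q(i) = ‖Σ̃‖_F L X(i) R`, `Σ = Σ̃ / ‖Σ̃‖_F`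
satisfy `‖Σ‖_F = 1` and the canonical orthogonality conditions
`∑ᵢ Q(i)ᵀ Σ² Q(i) = η I = ∑ᵢ Q(i) Σ² Q(i)ᵀ`. -/
theorem canonical_decomposition_correct {d r : ℕ} (hr : 0 < r)
    (X : Fin d → Matrix (Fin r) (Fin r) ℝ) (η : ℝ) (hη : 0 < η)
    (V_L V_R : Matrix (Fin r) (Fin r) ℝ)
    (hVL : V_L.PosDef) (hVR : V_R.PosDef)
    (hfixL : ∑ i, (X i)ᵀ * V_L * X i = η • V_L)
    (hfixR : ∑ i, X i * V_R * (X i)ᵀ = η • V_R)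
    (UL UR : Matrix (Fin r) (Fin r) ℝ) (hUL : IsUnit UL) (hUR : IsUnit UR)
    (hVLU : V_L = UL * ULᵀ) (hVRU : V_R = UR * URᵀ)
    (V W : Matrix (Fin r) (Fin r) ℝ) (σt : Fin r → ℝ) (hσt : ∀ i, 0 < σt i)
    (hV : Vᵀ * V = 1) (hW : Wᵀ * W = 1)
    (hSVD : V * Matrix.diagonal σt * Wᵀ = ULᵀ * UR) :
    let St : Matrix (Fin r) (Fin r) ℝ := Matrix.diagonal σt
    let c : ℝ := Real.sqrt (∑ i, ∑ j, St i j ^ 2)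
    let L := Wᵀ * UR⁻¹
    let R := (ULᵀ)⁻¹ * V
    let Q : Fin d → Matrix (Fin r) (Fin r) ℝ := fun i => c • (L * X i * R)
    let S : Matrix (Fin r) (Fin r) ℝ := c⁻¹ • St
    Real.sqrt (∑ i, ∑ j, S i j ^ 2) = 1 ∧
      ∑ i, (Q i)ᵀ * S ^ 2 * Q i = η • (1 : Matrix (Fin r) (Fin r) ℝ) ∧
      ∑ i, Q i * S ^ 2 * (Q i)ᵀ = η • (1 : Matrix (Fin r) (Fin r) ℝ) := by
  intro St c L R Q S
  have hdUL : IsUnit UL.det := (Matrix.isUnit_iff_isUnit_det UL).mp hUL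
  have hdUR : IsUnit UR.det := (Matrix.isUnit_iff_isUnit_det UR).mp hUR
  have hdULT : IsUnit ULᵀ.det := by rwa [Matrix.det_transpose]
  have hdURT : IsUnit URᵀ.det := by rwa [Matrix.det_transpose]
  have hne : Nonempty (Fin r) := ⟨⟨0, hr⟩⟩
  have hsum : ∑ i, ∑ j, St i j ^ 2 = ∑ i, σt i ^ 2 := by
    refine Finset.sum_congr rfl fun i _ => ?_
    rw [Finset.sum_eq_single i]
    · simp [St]
    · intro j _ hj
      simp [St, Matrix.diagonal_apply_ne σt (Ne.symm hj)]
    · simp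
  have hspos : 0 < ∑ i, σt i ^ 2 :=
    Finset.sum_pos (fun i _ => pow_pos (hσt i) 2) Finset.univ_nonempty
  have hcpos : 0 < c := by
    simp only [c, hsum]; exact Real.sqrt_pos.mpr hspos
  have hc2 : c ^ 2 = ∑ i, σt i ^ 2 := by
    simp only [c, hsum]; exact Real.sq_sqrt hspos.le
  have hStT : Stᵀ = St := Matrix.diagonal_transpose σt
  have hSVDT : W * St * Vᵀ = URᵀ * UL := by
    have h := congrArg Matrix.transpose hSVD
    simpa [Matrix.transpose_mul, Matrix.mul_assoc] using h
  -- key products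
  have h1 : W * (St * (St * Wᵀ)) = URᵀ * (V_L * UR) := by
    have e : W * (St * (St * Wᵀ)) = (W * St * Vᵀ) * (V * St * Wᵀ) := by
      have : Vᵀ * (V * (St * Wᵀ)) = St * Wᵀ := by
        rw [← Matrix.mul_assoc, hV, Matrix.one_mul]
      simp only [Matrix.mul_assoc, this]
    rw [e, hSVDT, hSVD, hVLU]
    simp only [Matrix.mul_assoc]
  have h2 : V * (St * (St * Vᵀ)) = ULᵀ * (V_R * UL) := by
    have e : V * (St * (St * Vᵀ)) = (V * St * Wᵀ) * (W * St * Vᵀ) := by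
      have : Wᵀ * (W * (St * Vᵀ)) = St * Vᵀ := by
        rw [← Matrix.mul_assoc, hW, Matrix.one_mul]
      simp only [Matrix.mul_assoc, this]
    rw [e, hSVDT, hSVD, hVRU]
    simp only [Matrix.mul_assoc]
  have key1 : Lᵀ * (St * St) * L = V_L := by
    have : Lᵀ * (St * St) * L = (URᵀ)⁻¹ * (W * (St * (St * (Wᵀ * UR⁻¹)))) := by
      simp [L, Matrix.transpose_mul, Matrix.transpose_nonsing_inv, Matrix.mul_assoc, hStT]
    rw [this]
    have e2 : W * (St * (St * (Wᵀ * UR⁻¹))) = (W * (St * (St * Wᵀ))) * UR⁻¹ := by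
      simp only [Matrix.mul_assoc]
    rw [e2, h1]
    rw [Matrix.mul_assoc URᵀ, Matrix.mul_nonsing_inv_cancel_right _ _ hdUR,
      Matrix.nonsing_inv_mul_cancel_left _ _ hdURT]
  have key2 : R * (St * St) * Rᵀ = V_R := by
    have hRT : Rᵀ = Vᵀ * UL⁻¹ := by
      simp [R, Matrix.transpose_mul, Matrix.transpose_nonsing_inv]
    have : R * (St * St) * Rᵀ = (ULᵀ)⁻¹ * ((V * (St * (St * Vᵀ))) * UL⁻¹) := by
      rw [hRT]; simp only [R, Matrix.mul_assoc]
    rw [this, h2]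
    rw [Matrix.mul_assoc ULᵀ, Matrix.mul_nonsing_inv_cancel_right _ _ hdUL,
      Matrix.nonsing_inv_mul_cancel_left _ _ hdULT]
  have key3 : Rᵀ * V_L * R = 1 := by
    have hRT : Rᵀ = Vᵀ * UL⁻¹ := by
      simp [R, Matrix.transpose_mul, Matrix.transpose_nonsing_inv]
    rw [hRT, hVLU]
    simp only [R, Matrix.mul_assoc]
    rw [Matrix.nonsing_inv_mul_cancel_left _ _ hdUL,
      Matrix.mul_nonsing_inv_cancel_left _ _ hdULT, hV]
  have key4 : L * V_R * Lᵀ = 1 := by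
    have hLT : Lᵀ = (URᵀ)⁻¹ * W := by
      simp [L, Matrix.transpose_mul, Matrix.transpose_nonsing_inv]
    rw [hLT, hVRU]
    simp only [L, Matrix.mul_assoc]
    rw [Matrix.nonsing_inv_mul_cancel_left _ _ hdUR,
      Matrix.mul_nonsing_inv_cancel_left _ _ hdURT, hW]
  have hS2 : S ^ 2 = (c⁻¹ * c⁻¹) • (St * St) := by
    simp [S, sq, smul_smul, smul_mul_assoc, Matrix.mul_smul]
  have hcancel : c * ((c⁻¹ * c⁻¹) * c) = 1 := by
    field_simp
  refine ⟨?_, ?_, ?_⟩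
  · have : ∑ i, ∑ j, S i j ^ 2 = 1 := by
      have : ∑ i, ∑ j, S i j ^ 2 = (c⁻¹) ^ 2 * ∑ i, ∑ j, St i j ^ 2 := by
        simp [S, Matrix.smul_apply, mul_pow, Finset.mul_sum]
      rw [this, hsum, ← hc2]
      field_simp
    rw [this, Real.sqrt_one]
  · have step : ∀ i, (Q i)ᵀ * S ^ 2 * Q i = Rᵀ * ((X i)ᵀ * V_L * X i) * R := by
      intro i
      have : (Q i)ᵀ * S ^ 2 * Q i
          = (c * ((c⁻¹ * c⁻¹) * c)) • ((L * X i * R)ᵀ * (St * St) * (L * X i * R)) := by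
        simp [Q, hS2, smul_mul_assoc, Matrix.mul_smul, smul_smul, mul_assoc]
      rw [this, hcancel, one_smul]
      have e : (L * X i * R)ᵀ * (St * St) * (L * X i * R)
          = Rᵀ * ((X i)ᵀ * (Lᵀ * (St * St) * L) * X i) * R := by
        simp only [Matrix.transpose_mul, Matrix.mul_assoc]
      rw [e, key1]
    calc ∑ i, (Q i)ᵀ * S ^ 2 * Q i = ∑ i, Rᵀ * ((X i)ᵀ * V_L * X i) * R := by
          exact Finset.sum_congr rfl fun i _ => step i
      _ = Rᵀ * (∑ i, (X i)ᵀ * V_L * X i) * R := by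
          rw [← Finset.sum_mul, ← Finset.mul_sum]
      _ = η • (Rᵀ * V_L * R) := by
          rw [hfixL]; simp [Matrix.mul_smul, Matrix.smul_mul]
      _ = η • 1 := by rw [key3]
  · have step : ∀ i, Q i * S ^ 2 * (Q i)ᵀ = L * (X i * V_R * (X i)ᵀ) * Lᵀ := by
      intro i
      have : Q i * S ^ 2 * (Q i)ᵀ
          = (c * ((c⁻¹ * c⁻¹) * c)) • ((L * X i * R) * (St * St) * (L * X i * R)ᵀ) := by
        simp [Q, hS2, smul_mul_assoc, Matrix.mul_smul, smul_smul, mul_assoc]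
      rw [this, hcancel, one_smul]
      have e : (L * X i * R) * (St * St) * (L * X i * R)ᵀ
          = L * (X i * (R * (St * St) * Rᵀ) * (X i)ᵀ) * Lᵀ := by
        simp only [Matrix.transpose_mul, Matrix.mul_assoc]
      rw [e, key2]
    calc ∑ i, Q i * S ^ 2 * (Q i)ᵀ = ∑ i, L * (X i * V_R * (X i)ᵀ) * Lᵀ := by
          exact Finset.sum_congr rfl fun i _ => step i
      _ = L * (∑ i, X i * V_R * (X i)ᵀ) * Lᵀ := by
          rw [← Finset.sum_mul, ← Finset.mul_sum]
      _ = η • (L * V_R * Lᵀ) := by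
          rw [hfixR]; simp [Matrix.mul_smul, Matrix.smul_mul]
      _ = η • 1 := by rw [key4]
end
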